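/- For k ≤ g, the space of Sp(2g,ℚ)-invariant linear functionals on the 2k-fold tensor power of the standard symplectic representation H_ℚ = ℚ^{2g} has dimension at least (2k-1)!!; more precisely, the functionals α_C indexed by linear chord diagrams C on 2k vertices are linearly independent. -/

import Mathlib

/-- The standard symplectic vector space `H_ℚ = ℚ^{2g}`. -/
abbrev SympVec (g : ℕ) : Type := (Fin g ⊕ Fin g) → ℚ

/-- The standard symplectic form `μ` on `ℚ^{2g}`, given by the matrix `J`. -/
noncomputable def sympForm (g : ℕ) (u v : SympVec g) : ℚ :=
  dotProduct u (Matrix.mulVec (Matrix.J (Fin g) ℚ) v)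

/-- Position `2s` among the `2k` vertices. -/
def posA {k : ℕ} (s : Fin k) : Fin (2 * k) := ⟨2 * s.1, by have := s.isLt; omega⟩

/-- Position `2s+1` among the `2k` vertices. -/
def posB {k : ℕ} (s : Fin k) : Fin (2 * k) := ⟨2 * s.1 + 1, by have := s.isLt; omega⟩

/-- A linear chord diagram on `{1,...,2k}`: a partition into `k` pairs `(i_s, j_s)` with
`i_s < j_s`, recorded canonically (chords listed with increasing first entries) via the
permutation sending `(1,2,...,2k)` to `(i_1,j_1,...,i_k,j_k)`. -/
abbrev LinearChordDiagram (k : ℕ) : Type :=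
  {π : Equiv.Perm (Fin (2 * k)) //
    (∀ s : Fin k, π (posA s) < π (posB s)) ∧
      ∀ s t : Fin k, s < t → π (posA s) < π (posA t)}

/-- The functional `α_C` on pure tensors:
`α_C(u_1 ⊗ ⋯ ⊗ u_{2k}) = sgn C · ∏_s μ(u_{i_s}, u_{j_s})`. -/
noncomputable def alphaFun (g k : ℕ) (C : LinearChordDiagram k)
    (u : Fin (2 * k) → SympVec g) : ℚ :=
  ((Equiv.Perm.sign C.1 : ℤ) : ℚ) *
    ∏ s : Fin k, sympForm g (u (C.1 (posA s))) (u (C.1 (posB s)))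

/-- The space of `Sp(2g,ℚ)`-invariant functionals on pure `2k`-fold tensors of `ℚ^{2g}`. -/
noncomputable def InvariantFunctionals (g k : ℕ) :
    Submodule ℚ ((Fin (2 * k) → SympVec g) → ℚ) where
  carrier := {α | ∀ A ∈ Matrix.symplecticGroup (Fin g) ℚ,
    ∀ u : Fin (2 * k) → SympVec g, α (fun i => Matrix.vecMul (u i) A) = α u}
  add_mem' := by
    intro a b ha hb A hA u
    simp only [Pi.add_apply, ha A hA u, hb A hA u]
  zero_mem' := by intro A hA u; rfl
  smul_mem' := by
    intro c a ha A hA u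
    simp only [Pi.smul_apply, ha A hA u]

lemma sympForm_vecMul (g : ℕ) (A : Matrix (Fin g ⊕ Fin g) (Fin g ⊕ Fin g) ℚ)
    (hA : A ∈ Matrix.symplecticGroup (Fin g) ℚ) (u v : SympVec g) :
    sympForm g (Matrix.vecMul u A) (Matrix.vecMul v A) = sympForm g u v := by
  rw [SymplecticGroup.mem_iff] at hA
  unfold sympForm
  rw [← Matrix.mulVec_transpose A v, Matrix.mulVec_mulVec, Matrix.dotProduct_mulVec,
    Matrix.vecMul_vecMul, ← Matrix.mul_assoc, hA, ← Matrix.dotProduct_mulVec]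

lemma sympForm_single (g : ℕ) (a b : Fin g ⊕ Fin g) :
    sympForm g (Pi.single a 1) (Pi.single b 1) = Matrix.J (Fin g) ℚ a b := by
  unfold sympForm
  rw [Matrix.mulVec_single, single_dotProduct]
  simp

lemma J_ne_zero {g : ℕ} {a b : Fin g ⊕ Fin g} (h : Matrix.J (Fin g) ℚ a b ≠ 0) :
    (∃ i, a = Sum.inl i ∧ b = Sum.inr i) ∨ (∃ i, a = Sum.inr i ∧ b = Sum.inl i) := by
  rcases a with i | i <;> rcases b with j | j <;>
    simp [Matrix.J, Matrix.one_apply, Matrix.fromBlocks_apply₁₁, Matrix.fromBlocks_apply₁₂,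
      Matrix.fromBlocks_apply₂₁, Matrix.fromBlocks_apply₂₂] at h ⊢
  · rcases h with ⟨rfl, -⟩; rfl
  · rcases h with ⟨rfl, -⟩; rfl

lemma J_inl_inr {g : ℕ} (i : Fin g) : Matrix.J (Fin g) ℚ (Sum.inl i) (Sum.inr i) = -1 := by
  simp [Matrix.J, Matrix.one_apply, Matrix.fromBlocks_apply₁₂]

/-- index of the basis vector placed at slot `p`. -/
def idx (g k : ℕ) (hk : k ≤ g) (p : Fin (2 * k)) : Fin g ⊕ Fin g :=
  if p.1 % 2 = 0 then Sum.inl ⟨p.1 / 2, by have := p.isLt; omega⟩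
  else Sum.inr ⟨p.1 / 2, by have := p.isLt; omega⟩

noncomputable def evalVec (g k : ℕ) (hk : k ≤ g) (C : LinearChordDiagram k) :
    Fin (2 * k) → SympVec g :=
  fun i => Pi.single (idx g k hk (C.1.symm i)) 1

lemma idx_posA (g k : ℕ) (hk : k ≤ g) (s : Fin k) :
    idx g k hk (posA s) = Sum.inl ⟨s.1, by omega⟩ := by
  have h : (2 * s.1) % 2 = 0 := by omega
  simp only [idx, posA, Fin.val_mk, h, if_true, Sum.inl.injEq, Fin.mk.injEq]
  omega

lemma idx_posB (g k : ℕ) (hk : k ≤ g) (s : Fin k) :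
    idx g k hk (posB s) = Sum.inr ⟨s.1, by omega⟩ := by
  have h : ¬ ((2 * s.1 + 1) % 2 = 0) := by omega
  simp only [idx, posB, Fin.val_mk, h, if_false, Sum.inr.injEq, Fin.mk.injEq]
  omega

/-- every slot is `posA s` or `posB s` for `s = ⌊·/2⌋`. -/
lemma pos_cover {k : ℕ} (i : Fin (2 * k)) :
    ∃ s : Fin k, i = posA s ∨ i = posB s := by
  refine ⟨⟨i.1 / 2, by have := i.isLt; omega⟩, ?_⟩
  have := i.isLt
  rcases Nat.even_or_odd i.1 with h | h
  · left; apply Fin.ext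
    simp only [posA, Fin.val_mk]
    rcases h with ⟨c, hc⟩; omega
  · right; apply Fin.ext
    simp only [posB, Fin.val_mk]
    rcases h with ⟨c, hc⟩; omega

lemma idx_eq_inl {g k : ℕ} (hk : k ≤ g) {q : Fin (2 * k)} {a : Fin g}
    (h : idx g k hk q = Sum.inl a) : q.1 % 2 = 0 ∧ q.1 / 2 = a.1 := by
  unfold idx at h
  split at h
  · obtain ⟨rfl⟩ := Sum.inl.inj h
    exact ⟨by assumption, rfl⟩
  · exact absurd h (by simp)

lemma idx_eq_inr {g k : ℕ} (hk : k ≤ g) {q : Fin (2 * k)} {a : Fin g}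
    (h : idx g k hk q = Sum.inr a) : q.1 % 2 = 1 ∧ q.1 / 2 = a.1 := by
  unfold idx at h
  split at h
  · exact absurd h (by simp)
  · obtain ⟨rfl⟩ := Sum.inr.inj h
    exact ⟨by omega, rfl⟩

lemma idx_cases {g k : ℕ} (hk : k ≤ g) {q r : Fin (2 * k)} {a : Fin g}
    (h : (idx g k hk q = Sum.inl a ∧ idx g k hk r = Sum.inr a) ∨
         (idx g k hk q = Sum.inr a ∧ idx g k hk r = Sum.inl a)) :
    ∃ t : Fin k, (q = posA t ∧ r = posB t) ∨ (q = posB t ∧ r = posA t) := by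
  have hq := q.isLt; have hr := r.isLt
  rcases h with ⟨h1, h2⟩ | ⟨h1, h2⟩
  · obtain ⟨e1, e2⟩ := idx_eq_inl hk h1
    obtain ⟨e3, e4⟩ := idx_eq_inr hk h2
    refine ⟨⟨q.1 / 2, by omega⟩, Or.inl ⟨Fin.ext ?_, Fin.ext ?_⟩⟩ <;>
      simp only [posA, posB, Fin.val_mk] <;> omega
  · obtain ⟨e1, e2⟩ := idx_eq_inr hk h1
    obtain ⟨e3, e4⟩ := idx_eq_inl hk h2
    refine ⟨⟨r.1 / 2, by omega⟩, Or.inr ⟨Fin.ext ?_, Fin.ext ?_⟩⟩ <;>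
      simp only [posA, posB, Fin.val_mk] <;> omega

lemma posA_injective {k : ℕ} : Function.Injective (posA (k := k)) := by
  intro a b hab
  have : (posA a).1 = (posA b).1 := congrArg Fin.val hab
  simp only [posA, Fin.val_mk] at this
  exact Fin.ext (by omega)

lemma eval_diag {g k : ℕ} (hk : k ≤ g) (C C' : LinearChordDiagram k)
    (h : ∀ s : Fin k,
      sympForm g (evalVec g k hk C (C'.1 (posA s))) (evalVec g k hk C (C'.1 (posB s))) ≠ 0) :
    C' = C := by
  obtain ⟨π, hπ1, hπ2⟩ := C
  obtain ⟨π', hπ'1, hπ'2⟩ := C'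
  simp only at h hπ1 hπ2 hπ'1 hπ'2 ⊢
  have key : ∀ s : Fin k, π' (posA s) = π (posA (⟨(π.symm (π' (posA s))).1 / 2, by
      have := (π.symm (π' (posA s))).isLt; omega⟩ : Fin k)) ∧
      π' (posB s) = π (posB (⟨(π.symm (π' (posA s))).1 / 2, by
      have := (π.symm (π' (posA s))).isLt; omega⟩ : Fin k)) := by
    intro s
    have h1 := h s
    simp only [evalVec, sympForm_single] at h1
    have h2 := J_ne_zero h1
    have h3 : ∃ t : Fin k, (π.symm (π' (posA s)) = posA t ∧ π.symm (π' (posB s)) = posB t) ∨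
        (π.symm (π' (posA s)) = posB t ∧ π.symm (π' (posB s)) = posA t) := by
      rcases h2 with ⟨i, hi1, hi2⟩ | ⟨i, hi1, hi2⟩
      · exact idx_cases hk (Or.inl ⟨hi1, hi2⟩)
      · exact idx_cases hk (Or.inr ⟨hi1, hi2⟩)
    obtain ⟨t, ⟨e1, e2⟩ | ⟨e1, e2⟩⟩ := h3
    · have f1 : π' (posA s) = π (posA t) := by
        rw [← Equiv.apply_symm_apply π (π' (posA s)), e1]
      have f2 : π' (posB s) = π (posB t) := by
        rw [← Equiv.apply_symm_apply π (π' (posB s)), e2]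
      have ht : (⟨(π.symm (π' (posA s))).1 / 2, by
          have := (π.symm (π' (posA s))).isLt; omega⟩ : Fin k) = t := by
        apply Fin.ext
        have := congrArg Fin.val e1
        simp only [posA, Fin.val_mk] at this ⊢
        omega
      rw [ht]
      exact ⟨f1, f2⟩
    · exfalso
      have f1 : π' (posA s) = π (posB t) := by
        rw [← Equiv.apply_symm_apply π (π' (posA s)), e1]
      have f2 : π' (posB s) = π (posA t) := by
        rw [← Equiv.apply_symm_apply π (π' (posB s)), e2]
      have := hπ'1 s
      rw [f1, f2] at this
      exact absurd (hπ1 t) (not_lt.mpr this.le)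
  set t : Fin k → Fin k := fun s => ⟨(π.symm (π' (posA s))).1 / 2, by
      have := (π.symm (π' (posA s))).isLt; omega⟩ with ht_def
  have ht1 : ∀ s, π' (posA s) = π (posA (t s)) := fun s => (key s).1
  have ht2 : ∀ s, π' (posB s) = π (posB (t s)) := fun s => (key s).2
  have htinj : Function.Injective t := by
    intro a b hab
    have : π' (posA a) = π' (posA b) := by rw [ht1 a, ht1 b, hab]
    exact posA_injective (π'.injective this)
  have htsurj : Function.Surjective t := Finite.surjective_of_injective htinj
  have hmono : StrictMono (fun s => π (posA s)) := fun a b hab => hπ2 a b hab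
  have hmono' : StrictMono (fun s => π' (posA s)) := fun a b hab => hπ'2 a b hab
  have hrange : Set.range (fun s => π' (posA s)) = Set.range (fun s => π (posA s)) := by
    have : (fun s => π' (posA s)) = (fun s => π (posA s)) ∘ t := funext ht1
    rw [this, Set.range_comp, Set.range_eq_univ.mpr htsurj, Set.image_univ]
  have heq : (fun s => π' (posA s)) = fun s => π (posA s) := by
    have : WellFoundedLT (Fin k) := Finite.to_wellFoundedLT
    exact (hmono'.range_inj hmono).mp hrange
  have hA : ∀ s, π' (posA s) = π (posA s) := fun s => congrFun heq s
  have hts : ∀ s, t s = s := by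
    intro s
    have : π (posA (t s)) = π (posA s) := by rw [← ht1 s, hA s]
    exact posA_injective (π.injective this)
  have hB : ∀ s, π' (posB s) = π (posB s) := by
    intro s; rw [ht2 s, hts s]
  apply Subtype.ext
  apply Equiv.ext
  intro i
  obtain ⟨s, rfl | rfl⟩ := pos_cover i
  exacts [hA s, hB s]

lemma alpha_eval_self (g k : ℕ) (hk : k ≤ g) (C : LinearChordDiagram k) :
    alphaFun g k C (evalVec g k hk C) ≠ 0 := by
  unfold alphaFun
  apply mul_ne_zero
  · simp [Equiv.Perm.sign]
  · rw [Finset.prod_ne_zero_iff]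
    intro s _
    simp only [evalVec, Equiv.symm_apply_apply, idx_posA g k hk, idx_posB g k hk,
      sympForm_single, J_inl_inr]
    norm_num

lemma alpha_eval_ne (g k : ℕ) (hk : k ≤ g) (C C' : LinearChordDiagram k) (hne : C' ≠ C) :
    alphaFun g k C' (evalVec g k hk C) = 0 := by
  by_contra hz
  apply hne
  apply eval_diag hk
  intro s
  have hp : (∏ s : Fin k,
      sympForm g (evalVec g k hk C (C'.1 (posA s))) (evalVec g k hk C (C'.1 (posB s)))) ≠ 0 :=
    right_ne_zero_of_mul hz
  exact Finset.prod_ne_zero_iff.mp hp s (Finset.mem_univ s)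

lemma alpha_li (g k : ℕ) (hk : k ≤ g) :
    LinearIndependent ℚ (fun C : LinearChordDiagram k => alphaFun g k C) := by
  rw [Fintype.linearIndependent_iff]
  intro c hc C0
  have h := congrFun hc (evalVec g k hk C0)
  simp only [Finset.sum_apply, Pi.smul_apply, smul_eq_mul, Pi.zero_apply] at h
  rw [Finset.sum_eq_single C0 (fun C' _ hne => by
      rw [alpha_eval_ne g k hk C0 C' hne, mul_zero])
    (fun habs => absurd (Finset.mem_univ C0) habs)] at h
  rcases mul_eq_zero.mp h with h | h
  · exact h
  · exact absurd h (alpha_eval_self g k hk C0)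

section Counting

/-- Extend: vertex `0` is matched to `j+1`, and `D` is placed on the remaining `2k` vertices. -/
def extFun (k : ℕ) (j : Fin (2 * k + 1)) (π : Equiv.Perm (Fin (2 * k))) :
    Fin (2 * (k + 1)) → Fin (2 * (k + 1)) := fun i =>
  if h0 : i.1 = 0 then ⟨0, by omega⟩
  else if h1 : i.1 = 1 then Fin.succ j
  else (Fin.succ j).succAbove (Fin.succ (π ⟨i.1 - 2, by have := i.isLt; omega⟩))

lemma extFun_zero (k : ℕ) (j : Fin (2 * k + 1)) (π : Equiv.Perm (Fin (2 * k)))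
    (h : (0 : ℕ) < 2 * (k + 1)) : extFun k j π ⟨0, h⟩ = ⟨0, by omega⟩ := by
  simp [extFun]

lemma extFun_one (k : ℕ) (j : Fin (2 * k + 1)) (π : Equiv.Perm (Fin (2 * k)))
    (h : (1 : ℕ) < 2 * (k + 1)) : extFun k j π ⟨1, h⟩ = Fin.succ j := by
  simp [extFun]

lemma extFun_big (k : ℕ) (j : Fin (2 * k + 1)) (π : Equiv.Perm (Fin (2 * k))) (m : Fin (2 * k)) :
    extFun k j π ⟨m.1 + 2, by have := m.isLt; omega⟩ =
      (Fin.succ j).succAbove (Fin.succ (π m)) := by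
  unfold extFun
  rw [dif_neg (by simp), dif_neg (by simp)]
  simp only [Nat.add_sub_cancel, Fin.eta]

lemma extFun_big_pos (k : ℕ) (j : Fin (2 * k + 1)) (x : Fin (2 * k + 1)) (hx : 0 < x) :
    0 < (Fin.succ j).succAbove x :=
  Fin.succAbove_pos (Fin.succ j) x hx

lemma extFun_injective (k : ℕ) (j : Fin (2 * k + 1)) (π : Equiv.Perm (Fin (2 * k))) :
    Function.Injective (extFun k j π) := by
  intro a b hab
  have hav := a.isLt; have hbv := b.isLt
  unfold extFun at hab
  have hpos : ∀ m : Fin (2 * k), (0 : ℕ) < ((Fin.succ j).succAbove (Fin.succ (π m))).1 := by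
    intro m
    have := extFun_big_pos k j (Fin.succ (π m)) (Fin.succ_pos _)
    exact this
  have hne : ∀ m : Fin (2 * k), (Fin.succ j).succAbove (Fin.succ (π m)) ≠ Fin.succ j :=
    fun m => Fin.succAbove_ne _ _
  split_ifs at hab with h1 h3 h4 h2 h3' h4'
  · exact Fin.ext (by omega)
  · exact absurd (congrArg Fin.val hab) (by simp [Fin.val_succ])
  · exact absurd (congrArg Fin.val hab).symm (Nat.ne_of_gt (hpos _))
  · exact absurd (congrArg Fin.val hab) (by simp [Fin.val_succ])
  · exact Fin.ext (by omega)
  · exact absurd hab.symm (hne _)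
  · exact absurd (congrArg Fin.val hab) (Nat.ne_of_gt (hpos _))
  · exact absurd hab (hne _)
  · have h5 := Fin.succ_injective _ ((Fin.strictMono_succAbove (Fin.succ j)).injective hab)
    have h6 := congrArg Fin.val (π.injective h5)
    simp only [Fin.val_mk] at h6
    exact Fin.ext (by omega)

lemma posA_zero (k : ℕ) : posA (0 : Fin (k + 1)) = ⟨0, by omega⟩ :=
  Fin.ext (by simp [posA])

lemma posB_zero (k : ℕ) : posB (0 : Fin (k + 1)) = ⟨1, by omega⟩ :=
  Fin.ext (by simp [posB]; exact Nat.mod_eq_of_lt (by omega))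

lemma posA_succ {k : ℕ} (t : Fin k) :
    posA (Fin.succ t) = ⟨(posA t).1 + 2, by have := (posA t).isLt; omega⟩ :=
  Fin.ext (by simp [posA]; omega)

lemma posB_succ {k : ℕ} (t : Fin k) :
    posB (Fin.succ t) = ⟨(posB t).1 + 2, by have := (posB t).isLt; omega⟩ :=
  Fin.ext (by simp [posB]; omega)

noncomputable def extendLCD (k : ℕ) (j : Fin (2 * k + 1)) (D : LinearChordDiagram k) :
    LinearChordDiagram (k + 1) := by
  refine ⟨Equiv.ofBijective (extFun k j D.1)
    ((Finite.injective_iff_bijective).mp (extFun_injective k j D.1)), ?_, ?_⟩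
  · intro s
    induction s using Fin.cases with
    | zero =>
      show extFun k j D.1 (posA 0) < extFun k j D.1 (posB 0)
      rw [posA_zero, posB_zero, extFun_zero, extFun_one]
      rw [Fin.lt_def]
      simp [Fin.val_succ]
    | succ t =>
      show extFun k j D.1 (posA (Fin.succ t)) < extFun k j D.1 (posB (Fin.succ t))
      rw [posA_succ, posB_succ, extFun_big, extFun_big]
      exact Fin.strictMono_succAbove _ (Fin.succ_lt_succ_iff.mpr (D.2.1 t))
  · intro s t hst
    induction t using Fin.cases with
    | zero => exact absurd hst (by simp [Fin.lt_def])
    | succ t' =>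
      induction s using Fin.cases with
      | zero =>
        show extFun k j D.1 (posA 0) < extFun k j D.1 (posA (Fin.succ t'))
        rw [posA_zero, posA_succ, extFun_zero, extFun_big]
        rw [Fin.lt_def]
        exact extFun_big_pos k j _ (Fin.succ_pos _)
      | succ s' =>
        show extFun k j D.1 (posA (Fin.succ s')) < extFun k j D.1 (posA (Fin.succ t'))
        rw [posA_succ, posA_succ, extFun_big, extFun_big]
        have hst' : s' < t' := by
          rw [Fin.lt_def] at hst ⊢
          simp [Fin.val_succ] at hst
          omega
        exact Fin.strictMono_succAbove _ (Fin.succ_lt_succ_iff.mpr (D.2.2 s' t' hst'))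

instance : Nonempty (LinearChordDiagram 0) :=
  ⟨⟨Equiv.refl _, fun s => Fin.elim0 s, fun s t _ => Fin.elim0 s⟩⟩

lemma extendLCD_injective (k : ℕ) :
    Function.Injective (fun p : Fin (2 * k + 1) × LinearChordDiagram k =>
      extendLCD k p.1 p.2) := by
  rintro ⟨j, D⟩ ⟨j', D'⟩ h
  have hx : ∀ x, extFun k j D.1 x = extFun k j' D'.1 x :=
    fun x => congrArg (fun C : LinearChordDiagram (k + 1) => C.1 x) h
  obtain rfl : j = j' := by
    have := hx ⟨1, by omega⟩
    rw [extFun_one, extFun_one] at this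
    exact Fin.succ_injective _ this
  have hD : D = D' := by
    apply Subtype.ext
    apply Equiv.ext
    intro m
    have := hx ⟨m.1 + 2, by have := m.isLt; omega⟩
    rw [extFun_big, extFun_big] at this
    exact Fin.succ_injective _ ((Fin.strictMono_succAbove _).injective this)
  rw [hD]

lemma doubleFactorial_le_card (k : ℕ) :
    Nat.doubleFactorial (2 * k - 1) ≤ Fintype.card (LinearChordDiagram k) := by
  induction k with
  | zero => simpa [Nat.one_le_iff_ne_zero, Nat.pos_iff_ne_zero] using Fintype.card_pos (α := LinearChordDiagram 0)
  | succ n ih =>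
    have hcard := Fintype.card_le_of_injective _ (extendLCD_injective n)
    rw [Fintype.card_prod, Fintype.card_fin] at hcard
    have hdf : Nat.doubleFactorial (2 * (n + 1) - 1) =
        (2 * n + 1) * Nat.doubleFactorial (2 * n - 1) := by
      cases n with
      | zero => rfl
      | succ m =>
        have h1 : 2 * (m + 1 + 1) - 1 = 2 * m + 1 + 2 := by omega
        have h2 : 2 * (m + 1) - 1 = 2 * m + 1 := by omega
        rw [h1, h2, Nat.doubleFactorial_add_two]
        have h3 : 2 * m + 1 + 2 = 2 * (m + 1) + 1 := by omega
        rw [h3]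
    rw [hdf]
    exact le_trans (Nat.mul_le_mul_left _ ih) hcard

end Counting

/-- for `k ≤ g`, the `Sp(2g,ℚ)`-invariant functionals `α_C` indexed by the
linear chord diagrams on `2k` vertices are linearly independent; in particular the space of
invariant functionals has dimension at least `(2k-1)!!`. -/
theorem alphaFun_linearIndependent (g k : ℕ) (hk : k ≤ g) :
    (∀ C : LinearChordDiagram k, alphaFun g k C ∈ InvariantFunctionals g k) ∧
    LinearIndependent ℚ (fun C : LinearChordDiagram k => alphaFun g k C) ∧
    (Nat.doubleFactorial (2 * k - 1) : Cardinal) ≤ Module.rank ℚ (InvariantFunctionals g k) := by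
  have mem : ∀ C : LinearChordDiagram k, alphaFun g k C ∈ InvariantFunctionals g k := by
    intro C A hA u
    unfold alphaFun
    congr 1
    exact Finset.prod_congr rfl fun s _ => sympForm_vecMul g A hA _ _
  refine ⟨mem, alpha_li g k hk, ?_⟩
  have li2 : LinearIndependent ℚ (fun C : LinearChordDiagram k =>
      (⟨alphaFun g k C, mem C⟩ : InvariantFunctionals g k)) := by
    apply LinearIndependent.of_comp (InvariantFunctionals g k).subtype
    exact alpha_li g k hk
  have hrank := li2.cardinal_le_rank
  refine le_trans ?_ hrank
  rw [Cardinal.mk_fintype]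
  exact_mod_cast doubleFactorial_le_card k
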